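/- Let μ be a nonnegative measure on subsets of {1,...,n} for n ∈ {4,5}, α_X = μ(X), satisfying α_i α_{ijl} ≤ α_{ij} α_{il} for all distinct i, j, l. Then Σ_{1,3}^1 ≤ Σ_{2,2}^1, where Σ_{r,s}^t = Σ α_X α_Y over unordered pairs {X,Y} with |X|=r, |Y|=s, |X∩Y|=t. -/

import Mathlib

open Finset

/-- `Σ_{1,3}^t`: sum of `α X * α Y` over pairs with `|X| = 1`, `|Y| = 3`, `|X ∩ Y| = t`
(each such unordered pair arises from exactly one ordered pair since the sizes differ). -/
def S13 (n : ℕ) (α : Finset (Fin n) → ℝ) (t : ℕ) : ℝ :=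
  ∑ X : Finset (Fin n), ∑ Y : Finset (Fin n),
    if X.card = 1 ∧ Y.card = 3 ∧ (X ∩ Y).card = t then α X * α Y else 0

/-- `Σ_{2,2}^t`: sum of `α X * α Y` over unordered pairs of 2-sets with `|X ∩ Y| = t`;
for `t = 2` this is `∑_{|X|=2} α X ^ 2`, otherwise half the ordered sum. -/
noncomputable def S22 (n : ℕ) (α : Finset (Fin n) → ℝ) (t : ℕ) : ℝ :=
  if t = 2 then ∑ X : Finset (Fin n), (if X.card = 2 then α X ^ 2 else 0)
  else (∑ X : Finset (Fin n), ∑ Y : Finset (Fin n),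
    if X.card = 2 ∧ Y.card = 2 ∧ (X ∩ Y).card = t then α X * α Y else 0) / 2

private lemma pair_eq' {β : Type*} [DecidableEq β] {a b c d : β}
    (h : ({a,b} : Finset β) = {c,d}) :
    (a = c ∧ b = d) ∨ (a = d ∧ b = c) := by
  have := congrArg (fun s : Finset β => (s : Set β)) h
  simpa [Set.pair_eq_pair_iff] using this

theorem stmt_11 (n : ℕ) (hn : n = 4 ∨ n = 5) (α : Finset (Fin n) → ℝ)
    (hα : ∀ X, 0 ≤ α X)
    (h : ∀ i j l : Fin n, i ≠ j → i ≠ l → j ≠ l →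
      α {i} * α {i, j, l} ≤ α {i, j} * α {i, l}) :
    S13 n α 1 ≤ S22 n α 1 := by
  classical
  set D' : Finset (Fin n × Fin n × Fin n) :=
    univ.filter (fun t => t.1 ≠ t.2.1 ∧ t.1 ≠ t.2.2 ∧ t.2.1 < t.2.2) with hD'
  set D'' : Finset (Fin n × Fin n × Fin n) :=
    univ.filter (fun t => t.1 ≠ t.2.1 ∧ t.1 ≠ t.2.2 ∧ t.2.2 < t.2.1) with hD''
  set D : Finset (Fin n × Fin n × Fin n) :=
    univ.filter (fun t => t.1 ≠ t.2.1 ∧ t.1 ≠ t.2.2 ∧ t.2.1 ≠ t.2.2) with hD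
  -- Step 1: S13 as a sum over D'
  have hS13 : S13 n α 1 = ∑ t ∈ D', α {t.1} * α {t.1, t.2.1, t.2.2} := by
    rw [S13, ← Finset.sum_product', ← Finset.sum_filter]
    refine (Finset.sum_bij (fun t _ => (({t.1}, {t.1, t.2.1, t.2.2}) :
        Finset (Fin n) × Finset (Fin n))) ?_ ?_ ?_ ?_).symm
    · rintro ⟨a, b, c⟩ ht
      simp only [hD', Finset.mem_filter, Finset.mem_univ, true_and] at ht
      obtain ⟨hab, hac, hbc⟩ := ht
      rw [Finset.mem_filter]
      refine ⟨Finset.mem_product.mpr ⟨Finset.mem_univ _, Finset.mem_univ _⟩,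
        Finset.card_singleton _, ?_, ?_⟩
      · show Finset.card {a, b, c} = 3
        rw [Finset.card_insert_of_notMem (by simp [hab, hac]),
          Finset.card_insert_of_notMem (by simp [hbc.ne]), Finset.card_singleton]
      · show (({a} : Finset (Fin n)) ∩ {a, b, c}).card = 1
        have : ({a} : Finset (Fin n)) ∩ {a, b, c} = {a} :=
          Finset.inter_eq_left.mpr (Finset.singleton_subset_iff.mpr (by simp))
        rw [this, Finset.card_singleton]
    · rintro ⟨a, b, c⟩ ht ⟨a', b', c'⟩ ht' heq
      simp only [hD', Finset.mem_filter, Finset.mem_univ, true_and] at ht ht'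
      obtain ⟨hab, hac, hbc⟩ := ht
      obtain ⟨hab', hac', hbc'⟩ := ht'
      simp only [Prod.mk.injEq] at heq
      obtain ⟨hX, hY⟩ := heq
      have ha : a = a' := Finset.singleton_injective hX
      subst ha
      have e1 : ({a,b,c} : Finset (Fin n)).erase a = {b,c} :=
        Finset.erase_insert (by simp [hab, hac])
      have e2 : ({a,b',c'} : Finset (Fin n)).erase a = {b',c'} :=
        Finset.erase_insert (by simp [hab', hac'])
      have hbc2 : ({b,c} : Finset (Fin n)) = {b',c'} := by rw [← e1, ← e2, hY]
      rcases pair_eq' hbc2 with ⟨hb, hc⟩ | ⟨hb, hc⟩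
      · simp [Prod.ext_iff, hb, hc]
      · exact absurd (hb ▸ hc ▸ hbc) (lt_asymm hbc')
    · rintro ⟨X, Y⟩ hXY
      rw [Finset.mem_filter] at hXY
      obtain ⟨-, hX, hY, hXYc⟩ := hXY
      dsimp only at hX hY hXYc
      obtain ⟨i, hXi⟩ := Finset.card_eq_one.mp hX
      subst hXi
      have hiY : i ∈ Y := by
        have hne : (({i} : Finset (Fin n)) ∩ Y).Nonempty := by
          rw [← Finset.card_pos, hXYc]; norm_num
        obtain ⟨x, hx⟩ := hne
        rw [Finset.mem_inter, Finset.mem_singleton] at hx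
        exact hx.1 ▸ hx.2
      have h2 : (Y.erase i).card = 2 := by rw [Finset.card_erase_of_mem hiY, hY]
      obtain ⟨j, l, hjl, hpair⟩ := Finset.card_eq_two.mp h2
      have hjY : j ∈ Y.erase i := hpair ▸ (by simp)
      have hlY : l ∈ Y.erase i := hpair ▸ (by simp)
      have hij : i ≠ j := fun hh => (Finset.mem_erase.mp hjY).1 hh.symm
      have hil : i ≠ l := fun hh => (Finset.mem_erase.mp hlY).1 hh.symm
      have hYeq : Y = {i, j, l} := by rw [← Finset.insert_erase hiY, hpair]
      rcases lt_or_gt_of_ne hjl with hlt | hgt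
      · exact ⟨(i, j, l), by simp [hD', hij, hil, hlt], by rw [hYeq]⟩
      · exact ⟨(i, l, j), by simp [hD', hil, hij, hgt],
          by rw [hYeq, Finset.pair_comm j l]⟩
    · rintro ⟨a, b, c⟩ _; rfl
  -- Step 2: the ordered 2-2 sum as a sum over D
  have hS22 : (∑ X : Finset (Fin n), ∑ Y : Finset (Fin n),
      if X.card = 2 ∧ Y.card = 2 ∧ (X ∩ Y).card = 1 then α X * α Y else 0)
      = ∑ t ∈ D, α {t.1, t.2.1} * α {t.1, t.2.2} := by
    rw [← Finset.sum_product', ← Finset.sum_filter]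
    refine (Finset.sum_bij (fun t _ => (({t.1, t.2.1}, {t.1, t.2.2}) :
        Finset (Fin n) × Finset (Fin n))) ?_ ?_ ?_ ?_).symm
    · rintro ⟨a, b, c⟩ ht
      simp only [hD, Finset.mem_filter, Finset.mem_univ, true_and] at ht
      obtain ⟨hab, hac, hbc⟩ := ht
      rw [Finset.mem_filter]
      refine ⟨Finset.mem_product.mpr ⟨Finset.mem_univ _, Finset.mem_univ _⟩,
        Finset.card_pair hab, Finset.card_pair hac, ?_⟩
      show (({a, b} : Finset (Fin n)) ∩ {a, c}).card = 1
      have : ({a,b} : Finset (Fin n)) ∩ {a,c} = {a} := by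
        ext x
        simp only [Finset.mem_inter, Finset.mem_insert, Finset.mem_singleton]
        constructor
        · rintro ⟨hx1 | hx1, hx2 | hx2⟩
          · exact hx1
          · exact hx1
          · exact hx2
          · exact absurd (hx1.symm.trans hx2) hbc
        · rintro rfl; exact ⟨Or.inl rfl, Or.inl rfl⟩
      rw [this, Finset.card_singleton]
    · rintro ⟨a, b, c⟩ ht ⟨a', b', c'⟩ ht' heq
      simp only [hD, Finset.mem_filter, Finset.mem_univ, true_and] at ht ht'
      obtain ⟨hab, hac, hbc⟩ := ht
      obtain ⟨hab', hac', hbc'⟩ := ht'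
      simp only [Prod.mk.injEq] at heq
      obtain ⟨h1, h2⟩ := heq
      rcases pair_eq' h1 with ⟨ha1, hb⟩ | ⟨ha1, hb⟩ <;>
        rcases pair_eq' h2 with ⟨ha2, hc⟩ | ⟨ha2, hc⟩
      · simp [Prod.ext_iff, ha1, hb, hc]
      · exact absurd (hc.trans ha1.symm) (Ne.symm hac)
      · exact absurd (hb.trans ha2.symm) (Ne.symm hab)
      · exact absurd (hb.trans hc.symm) hbc
    · rintro ⟨A, B⟩ hAB
      rw [Finset.mem_filter] at hAB
      obtain ⟨-, hA, hB, hABc⟩ := hAB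
      dsimp only at hA hB hABc
      obtain ⟨i, hi⟩ := Finset.card_eq_one.mp hABc
      have hiA : i ∈ A := (Finset.mem_inter.mp (hi ▸ Finset.mem_singleton_self i)).1
      have hiB : i ∈ B := (Finset.mem_inter.mp (hi ▸ Finset.mem_singleton_self i)).2
      have hA1 : (A.erase i).card = 1 := by rw [Finset.card_erase_of_mem hiA, hA]
      have hB1 : (B.erase i).card = 1 := by rw [Finset.card_erase_of_mem hiB, hB]
      obtain ⟨j, hj⟩ := Finset.card_eq_one.mp hA1
      obtain ⟨l, hl⟩ := Finset.card_eq_one.mp hB1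
      have hjA : j ∈ A.erase i := hj ▸ Finset.mem_singleton_self j
      have hlB : l ∈ B.erase i := hl ▸ Finset.mem_singleton_self l
      have hij : i ≠ j := fun hh => (Finset.mem_erase.mp hjA).1 hh.symm
      have hil : i ≠ l := fun hh => (Finset.mem_erase.mp hlB).1 hh.symm
      have hjl : j ≠ l := by
        rintro rfl
        have : j ∈ A ∩ B := Finset.mem_inter.mpr
          ⟨(Finset.mem_erase.mp hjA).2, (Finset.mem_erase.mp hlB).2⟩
        rw [hi, Finset.mem_singleton] at this
        exact hij this.symm
      refine ⟨(i, j, l), by simp [hD, hij, hil, hjl], ?_⟩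
      have hAeq : A = {i, j} := by rw [← Finset.insert_erase hiA, hj]
      have hBeq : B = {i, l} := by rw [← Finset.insert_erase hiB, hl]
      rw [hAeq, hBeq]
    · rintro ⟨a, b, c⟩ _; rfl
  -- Step 3: sum over D = 2 * sum over D'
  have hsplit : ∑ t ∈ D, α {t.1, t.2.1} * α {t.1, t.2.2}
      = 2 * ∑ t ∈ D', α {t.1, t.2.1} * α {t.1, t.2.2} := by
    have hunion : D = D' ∪ D'' := by
      ext t
      simp only [hD, hD', hD'', Finset.mem_union, Finset.mem_filter, Finset.mem_univ,
        true_and]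
      constructor
      · rintro ⟨h1, h2, h3⟩
        rcases lt_or_gt_of_ne h3 with hh | hh
        · exact Or.inl ⟨h1, h2, hh⟩
        · exact Or.inr ⟨h1, h2, hh⟩
      · rintro (⟨h1, h2, h3⟩ | ⟨h1, h2, h3⟩)
        · exact ⟨h1, h2, h3.ne⟩
        · exact ⟨h1, h2, h3.ne'⟩
    have hdisj : Disjoint D' D'' := by
      rw [Finset.disjoint_left]
      rintro t ht ht'
      simp only [hD', hD'', Finset.mem_filter] at ht ht'
      exact absurd ht.2.2.2 (lt_asymm ht'.2.2.2)
    have hswap : ∑ t ∈ D'', α {t.1, t.2.1} * α {t.1, t.2.2}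
        = ∑ t ∈ D', α {t.1, t.2.1} * α {t.1, t.2.2} := by
      refine Finset.sum_nbij' (fun t => (t.1, t.2.2, t.2.1)) (fun t => (t.1, t.2.2, t.2.1))
        ?_ ?_ ?_ ?_ ?_
      · rintro ⟨a, b, c⟩ ht
        simp only [hD', hD'', Finset.mem_filter, Finset.mem_univ, true_and] at ht ⊢
        exact ⟨ht.2.1, ht.1, ht.2.2⟩
      · rintro ⟨a, b, c⟩ ht
        simp only [hD', hD'', Finset.mem_filter, Finset.mem_univ, true_and] at ht ⊢
        exact ⟨ht.2.1, ht.1, ht.2.2⟩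
      · rintro ⟨a, b, c⟩ _; rfl
      · rintro ⟨a, b, c⟩ _; rfl
      · rintro ⟨a, b, c⟩ _; exact mul_comm _ _
    rw [hunion, Finset.sum_union hdisj, hswap]; ring
  -- Step 4: termwise comparison on D'
  have hterm : ∑ t ∈ D', α {t.1} * α {t.1, t.2.1, t.2.2}
      ≤ ∑ t ∈ D', α {t.1, t.2.1} * α {t.1, t.2.2} := by
    refine Finset.sum_le_sum ?_
    rintro ⟨a, b, c⟩ ht
    simp only [hD', Finset.mem_filter, Finset.mem_univ, true_and] at ht
    exact h a b c ht.1 ht.2.1 ht.2.2.ne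
  -- conclude
  have hS22' : S22 n α 1 = ∑ t ∈ D', α {t.1, t.2.1} * α {t.1, t.2.2} := by
    rw [S22]
    norm_num [hS22, hsplit]
  rw [hS13, hS22']
  exact hterm
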